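/- Let N and N_R be positive integers, and let F : ℝ → ℝ be twice differentiable and satisfy Kummer's differential equation σ·F''(σ) + (N_R − σ)·F'(σ) − N·F(σ) = 0 for all σ ∈ ℝ. For a ∈ ℝ define M(s, a) = (1 − s)^{−N} F(a s/(1 − s)) for s ≠ 1. Then for every a ∈ ℝ and every s ≠ 1, d²/ds²[s³ M(s,a)] − 2 d²/ds²[s² M(s,a)] + d²/ds²[s M(s,a)] + (2N − 4) d/ds[s² M(s,a)] + (6 − 2N − N_R − a) d/ds[s M(s,a)] + (N_R − 2) d/ds[M(s,a)] + (N − 1)(N − 2) s M(s,a) + (N − 1)(2 − N_R − a) M(s,a) = 0, where d^j/ds^j[s^i M(s,a)] denotes the j-th derivative of the function s ↦ s^i M(s, a). -/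

import Mathlib

noncomputable def myM0 (F : ℝ → ℝ) (N : ℕ) (a s : ℝ) : ℝ :=
  ((1 - s) ^ N)⁻¹ * F (a * s / (1 - s))

noncomputable def myM1 (F F' : ℝ → ℝ) (N : ℕ) (a s : ℝ) : ℝ :=
  ((N : ℝ) * F (a * s / (1 - s)) * (1 - s) + a * F' (a * s / (1 - s))) / (1 - s) ^ (N + 2)

noncomputable def myM2 (F F' F'' : ℝ → ℝ) (N : ℕ) (a s : ℝ) : ℝ :=
  ((N : ℝ) * ((N : ℝ) + 1) * F (a * s / (1 - s)) * (1 - s) ^ 2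
    + a * (2 * (N : ℝ) + 2) * F' (a * s / (1 - s)) * (1 - s)
    + a ^ 2 * F'' (a * s / (1 - s))) / (1 - s) ^ (N + 4)

lemma myM0_def (F : ℝ → ℝ) (N : ℕ) (a s : ℝ) :
    myM0 F N a s = ((1 - s) ^ N)⁻¹ * F (a * s / (1 - s)) := rfl

lemma hasDerivAt_sig (a s : ℝ) (hs : s ≠ 1) :
    HasDerivAt (fun t => a * t / (1 - t)) (a / (1 - s) ^ 2) s := by
  have hu : (1 : ℝ) - s ≠ 0 := sub_ne_zero.mpr (Ne.symm hs)
  have h1 : HasDerivAt (fun t : ℝ => a * t) a s := by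
    simpa using (hasDerivAt_id s).const_mul a
  have h2 : HasDerivAt (fun t : ℝ => 1 - t) (-1) s := by
    simpa using (hasDerivAt_id s).const_sub 1
  have := h1.fun_div h2 hu
  refine this.congr_deriv ?_
  field_simp
  ring

lemma hasDerivAt_myM0 (F : ℝ → ℝ) (hF : Differentiable ℝ F) (N : ℕ) (hN : 0 < N)
    (a s : ℝ) (hs : s ≠ 1) :
    HasDerivAt (myM0 F N a) (myM1 F (deriv F) N a s) s := by
  obtain ⟨n, rfl⟩ : ∃ n, N = n + 1 := ⟨N - 1, (Nat.succ_pred_eq_of_pos hN).symm⟩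
  have hu : (1 : ℝ) - s ≠ 0 := sub_ne_zero.mpr (Ne.symm hs)
  have hσ := hasDerivAt_sig a s hs
  have hFσ : HasDerivAt (fun t => F (a * t / (1 - t)))
      (deriv F (a * s / (1 - s)) * (a / (1 - s) ^ 2)) s :=
    (hF (a * s / (1 - s))).hasDerivAt.comp s hσ
  have hg : HasDerivAt (fun t : ℝ => (1 - t) ^ (n + 1))
      ((n + 1 : ℝ) * (1 - s) ^ n * (-1)) s := by
    have h2 : HasDerivAt (fun t : ℝ => 1 - t) (-1) s := by
      simpa using (hasDerivAt_id s).const_sub 1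
    simpa using h2.fun_pow (n + 1)
  have := hFσ.fun_div hg (pow_ne_zero _ hu)
  have heq : (fun t => F (a * t / (1 - t)) / (1 - t) ^ (n + 1)) = myM0 F (n + 1) a := by
    funext t
    simp [myM0, div_eq_inv_mul]
  rw [heq] at this
  refine this.congr_deriv ?_
  simp only [myM1]
  field_simp
  push_cast
  ring

lemma hasDerivAt_myM1 (F : ℝ → ℝ) (hF : Differentiable ℝ F) (hF' : Differentiable ℝ (deriv F))
    (N : ℕ) (hN : 0 < N) (a s : ℝ) (hs : s ≠ 1) :
    HasDerivAt (myM1 F (deriv F) N a) (myM2 F (deriv F) (deriv (deriv F)) N a s) s := by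
  obtain ⟨n, rfl⟩ : ∃ n, N = n + 1 := ⟨N - 1, (Nat.succ_pred_eq_of_pos hN).symm⟩
  have hu : (1 : ℝ) - s ≠ 0 := sub_ne_zero.mpr (Ne.symm hs)
  have hσ := hasDerivAt_sig a s hs
  have hFσ : HasDerivAt (fun t => F (a * t / (1 - t)))
      (deriv F (a * s / (1 - s)) * (a / (1 - s) ^ 2)) s :=
    (hF (a * s / (1 - s))).hasDerivAt.comp s hσ
  have hF'σ : HasDerivAt (fun t => deriv F (a * t / (1 - t)))
      (deriv (deriv F) (a * s / (1 - s)) * (a / (1 - s) ^ 2)) s :=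
    (hF' (a * s / (1 - s))).hasDerivAt.comp (h₂ := deriv F) s hσ
  have h2 : HasDerivAt (fun t : ℝ => 1 - t) (-1) s := by
    simpa using (hasDerivAt_id s).const_sub 1
  have hnum : HasDerivAt
      (fun t => (↑(n + 1) : ℝ) * F (a * t / (1 - t)) * (1 - t)
        + a * deriv F (a * t / (1 - t)))
      (((↑(n + 1) : ℝ) * (deriv F (a * s / (1 - s)) * (a / (1 - s) ^ 2))) * (1 - s)
        + ((↑(n + 1) : ℝ) * F (a * s / (1 - s))) * (-1)
        + a * (deriv (deriv F) (a * s / (1 - s)) * (a / (1 - s) ^ 2))) s :=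
    ((hFσ.const_mul (↑(n + 1) : ℝ)).fun_mul h2).fun_add (hF'σ.const_mul a)
  have hden : HasDerivAt (fun t : ℝ => (1 - t) ^ (n + 1 + 2))
      ((n + 1 + 2 : ℝ) * (1 - s) ^ (n + 2) * (-1)) s := by
    have := h2.fun_pow (n + 1 + 2)
    refine this.congr_deriv ?_
    rw [show n + 1 + 2 - 1 = n + 2 by omega]
    push_cast
    ring
  have := hnum.fun_div hden (pow_ne_zero _ hu)
  refine this.congr_deriv ?_
  simp only [myM2]
  field_simp
  push_cast
  ring



/-- If `F` is twice differentiable and satisfies Kummer's equation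
`σ F'' + (N_R − σ) F' − N F = 0`, and `M(s,a) = (1−s)^{−N} F(as/(1−s))`, then, for every
`a` and every `s ≠ 1`,
`d²/ds²[s³M] − 2 d²/ds²[s²M] + d²/ds²[sM] + (2N−4) d/ds[s²M] + (6−2N−N_R−a) d/ds[sM]
 + (N_R−2) d/ds[M] + (N−1)(N−2) s M + (N−1)(2−N_R−a) M = 0`. -/
theorem stmt5 (N NR : ℕ) (hN : 0 < N) (hNR : 0 < NR) (F : ℝ → ℝ)
    (hF : Differentiable ℝ F) (hF' : Differentiable ℝ (deriv F))
    (hKummer : ∀ σ : ℝ,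
      σ * deriv (deriv F) σ + ((NR : ℝ) - σ) * deriv F σ - (N : ℝ) * F σ = 0)
    (M : ℝ → ℝ → ℝ)
    (hM : ∀ s a : ℝ, M s a = (1 - s) ^ (-(N : ℤ)) * F (a * s / (1 - s))) :
    ∀ (a s : ℝ), s ≠ 1 →
      deriv (deriv (fun s' => s' ^ 3 * M s' a)) s
        - 2 * deriv (deriv (fun s' => s' ^ 2 * M s' a)) s
        + deriv (deriv (fun s' => s' * M s' a)) s
        + (2 * (N : ℝ) - 4) * deriv (fun s' => s' ^ 2 * M s' a) s
        + (6 - 2 * (N : ℝ) - (NR : ℝ) - a) * deriv (fun s' => s' * M s' a) s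
        + ((NR : ℝ) - 2) * deriv (fun s' => M s' a) s
        + ((N : ℝ) - 1) * ((N : ℝ) - 2) * s * M s a
        + ((N : ℝ) - 1) * (2 - (NR : ℝ) - a) * M s a = 0 := by
  intro a s hs
  have hu : (1 : ℝ) - s ≠ 0 := sub_ne_zero.mpr (Ne.symm hs)
  simp only [hM, zpow_neg, zpow_natCast, ← myM0_def]
  set m0 := myM0 F N a s with hm0
  set m1 := myM1 F (deriv F) N a s with hm1
  set m2 := myM2 F (deriv F) (deriv (deriv F)) N a s with hm2
  have hM0' : HasDerivAt (myM0 F N a) m1 s := hasDerivAt_myM0 F hF N hN a s hs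
  have hM1' : HasDerivAt (myM1 F (deriv F) N a) m2 s := hasDerivAt_myM1 F hF hF' N hN a s hs
  -- first derivatives
  have hd1 : deriv (fun s' => myM0 F N a s') s = m1 := hM0'.deriv
  have hd2 : deriv (fun s' => s' * myM0 F N a s') s = m0 + s * m1 := by
    have := ((hasDerivAt_id s).fun_mul hM0').deriv
    simpa using this
  have hd3 : deriv (fun s' => s' ^ 2 * myM0 F N a s') s = 2 * s * m0 + s ^ 2 * m1 := by
    have := ((hasDerivAt_pow 2 s).fun_mul hM0').deriv
    simp at this
    rw [this] <;> ring
  -- second derivatives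
  have hdd1 : deriv (deriv (fun s' => s' * myM0 F N a s')) s = 2 * m1 + s * m2 := by
    have hev : deriv (fun s' => s' * myM0 F N a s') =ᶠ[nhds s]
        (fun t => myM0 F N a t + t * myM1 F (deriv F) N a t) := by
      filter_upwards [isOpen_ne.mem_nhds hs] with t ht
      have := ((hasDerivAt_id t).fun_mul (hasDerivAt_myM0 F hF N hN a t ht)).deriv
      simpa using this
    rw [hev.deriv_eq]
    have hd : HasDerivAt (fun t => myM0 F N a t + t * myM1 F (deriv F) N a t)
        (2 * m1 + s * m2) s := by
      have := (hasDerivAt_myM0 F hF N hN a s hs).fun_add ((hasDerivAt_id s).fun_mul hM1')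
      refine this.congr_deriv ?_
      simp only [id_eq, ← hm0, ← hm1, ← hm2]
      push_cast
      ring
    exact hd.deriv
  have hdd2 : deriv (deriv (fun s' => s' ^ 2 * myM0 F N a s')) s
      = 2 * m0 + 4 * s * m1 + s ^ 2 * m2 := by
    have hev : deriv (fun s' => s' ^ 2 * myM0 F N a s') =ᶠ[nhds s]
        (fun t => 2 * t * myM0 F N a t + t ^ 2 * myM1 F (deriv F) N a t) := by
      filter_upwards [isOpen_ne.mem_nhds hs] with t ht
      have := ((hasDerivAt_pow 2 t).fun_mul (hasDerivAt_myM0 F hF N hN a t ht)).deriv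
      simp at this
      rw [this] <;> ring
    rw [hev.deriv_eq]
    have hd : HasDerivAt (fun t => 2 * t * myM0 F N a t + t ^ 2 * myM1 F (deriv F) N a t)
        (2 * m0 + 4 * s * m1 + s ^ 2 * m2) s := by
      have hA := (((hasDerivAt_id s).const_mul (2:ℝ)).fun_mul (hasDerivAt_myM0 F hF N hN a s hs))
      have hB := (hasDerivAt_pow 2 s).fun_mul hM1'
      refine (hA.fun_add hB).congr_deriv ?_
      simp only [id_eq, ← hm0, ← hm1, ← hm2]
      push_cast
      ring
    exact hd.deriv
  have hdd3 : deriv (deriv (fun s' => s' ^ 3 * myM0 F N a s')) s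
      = 6 * s * m0 + 6 * s ^ 2 * m1 + s ^ 3 * m2 := by
    have hev : deriv (fun s' => s' ^ 3 * myM0 F N a s') =ᶠ[nhds s]
        (fun t => 3 * t ^ 2 * myM0 F N a t + t ^ 3 * myM1 F (deriv F) N a t) := by
      filter_upwards [isOpen_ne.mem_nhds hs] with t ht
      have := ((hasDerivAt_pow 3 t).fun_mul (hasDerivAt_myM0 F hF N hN a t ht)).deriv
      simp at this
      rw [this] <;> ring
    rw [hev.deriv_eq]
    have hd : HasDerivAt (fun t => 3 * t ^ 2 * myM0 F N a t + t ^ 3 * myM1 F (deriv F) N a t)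
        (6 * s * m0 + 6 * s ^ 2 * m1 + s ^ 3 * m2) s := by
      have hA := (((hasDerivAt_pow 2 s).const_mul (3:ℝ)).fun_mul (hasDerivAt_myM0 F hF N hN a s hs))
      have hB := (hasDerivAt_pow 3 s).fun_mul hM1'
      refine (hA.fun_add hB).congr_deriv ?_
      simp only [id_eq, ← hm0, ← hm1, ← hm2]
      push_cast
      ring
    exact hd.deriv
  rw [hd1, hd2, hd3, hdd1, hdd2, hdd3]
  -- express m0, m1, m2 over common denominator Q = ((1-s)^(N+4))⁻¹
  have hpow : ((1 - s) ^ (N + 4) : ℝ) = (1 - s) ^ N * (1 - s) ^ 4 := pow_add _ _ _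
  have e0 : m0 = (1 - s) ^ 4 * F (a * s / (1 - s)) * ((1 - s) ^ (N + 4))⁻¹ := by
    rw [hm0, myM0_def, hpow, mul_inv]
    field_simp
  have e1 : m1 = ((N : ℝ) * F (a * s / (1 - s)) * (1 - s) + a * deriv F (a * s / (1 - s)))
      * (1 - s) ^ 2 * ((1 - s) ^ (N + 4))⁻¹ := by
    rw [hm1, myM1, hpow, div_eq_mul_inv, mul_inv, show N + 2 = N + 2 from rfl]
    rw [show ((1 - s) ^ (N + 2) : ℝ) = (1 - s) ^ N * (1 - s) ^ 2 from pow_add _ _ _, mul_inv]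
    field_simp
  have e2 : m2 = ((N : ℝ) * ((N : ℝ) + 1) * F (a * s / (1 - s)) * (1 - s) ^ 2
      + a * (2 * (N : ℝ) + 2) * deriv F (a * s / (1 - s)) * (1 - s)
      + a ^ 2 * deriv (deriv F) (a * s / (1 - s))) * ((1 - s) ^ (N + 4))⁻¹ := by
    rw [hm2, myM2, div_eq_mul_inv]
  have hK := hKummer (a * s / (1 - s))
  have hK2 : a * s * deriv (deriv F) (a * s / (1 - s))
      + ((NR : ℝ) * (1 - s) - a * s) * deriv F (a * s / (1 - s))
      - (N : ℝ) * (1 - s) * F (a * s / (1 - s)) = 0 := by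
    field_simp at hK
    linarith [hK]
  rw [e0, e1, e2]
  linear_combination (a * ((1 - s) ^ (N + 4))⁻¹ * (1 - s) ^ 2) * hK2
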